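/- For every Boolean algebra B, there is a generalized Galois-Tukey connection from the reaping relation of P(ω)/fin to the reaping relation of the reduced power ωB/Fin. In particular 𝔯 ≤ 𝔯(ωB/Fin) and 𝔰(ωB/Fin) ≤ 𝔰. -/

import Mathlib

/-- A relational system `⟨A₋, A, A₊⟩`. -/
structure RelSys : Type 1 where
  Dom : Type
  Cod : Type
  Rel : Dom → Cod → Prop

/-- The dominating number `𝔡(A)` of a relational system. -/
noncomputable def dNum (S : RelSys) : Cardinal :=
  sInf { c | ∃ Y : Set S.Cod, Cardinal.mk Y = c ∧ ∀ x : S.Dom, ∃ y ∈ Y, S.Rel x y }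

/-- The bounding number `𝔟(A)` of a relational system. -/
noncomputable def bNum (S : RelSys) : Cardinal :=
  sInf { c | ∃ X : Set S.Dom, Cardinal.mk X = c ∧ ∀ y : S.Cod, ∃ x ∈ X, ¬ S.Rel x y }

/-- A generalized Galois–Tukey connection from `S` to `T` (`S ≤_T T`). -/
def GT (S T : RelSys) : Prop :=
  ∃ (φm : S.Dom → T.Dom) (φp : T.Cod → S.Cod),
    ∀ a b, T.Rel (φm a) b → S.Rel a (φp b)

/-- Galois–Tukey equivalence. -/
def GTequiv (S T : RelSys) : Prop := GT S T ∧ GT T S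

/-- The σ-version `A^σ` of a relational system. -/
def sigmaSys (S : RelSys) : RelSys :=
  ⟨S.Dom, ℕ → S.Cod, fun a f => ∃ n, S.Rel a (f n)⟩

/-- Sequential composition `A;B` of relational systems. -/
def seqComp (S T : RelSys) : RelSys :=
  ⟨S.Dom × (S.Cod → T.Dom), S.Cod × T.Cod,
   fun p q => S.Rel p.1 q.1 ∧ T.Rel (p.2 q.1) q.2⟩

/-- An antichain in a Boolean algebra: pairwise disjoint nonzero elements. -/
def BAAntichain {α : Type} [BooleanAlgebra α] (A : Set α) : Prop :=
  (∀ a ∈ A, a ≠ ⊥) ∧ ∀ a ∈ A, ∀ b ∈ A, a ≠ b → a ⊓ b = ⊥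

/-- A maximal antichain in a Boolean algebra. -/
def MaxAC {α : Type} [BooleanAlgebra α] (A : Set α) : Prop :=
  BAAntichain A ∧ ∀ b : α, b ≠ ⊥ → ∃ a ∈ A, a ⊓ b ≠ ⊥

/-- The countable chain condition. -/
def CCC (α : Type) [BooleanAlgebra α] : Prop :=
  ∀ A : Set α, BAAntichain A → A.Countable

/-- `C` refines `A` (written `A ≤ C`): every element of `C` is below some element of `A`. -/
def Refines {α : Type} [BooleanAlgebra α] (A C : Set α) : Prop :=
  ∀ c ∈ C, ∃ a ∈ A, c ≤ a

/-- `C` almost refines `A` (written `A ≤* C`). -/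
def AlmostRefines {α : Type} [BooleanAlgebra α] (A C : Set α) : Prop :=
  ∃ F : Finset α, ↑F ⊆ A ∧ Refines ((A \ ↑F) ∪ {F.sup id}) C

/-- The set of maximal antichains of `α`. -/
def PartT (α : Type) [BooleanAlgebra α] : Type := {A : Set α // MaxAC A}

/-- The refinement relational system `Part(α)`. -/
def PartSys (α : Type) [BooleanAlgebra α] : RelSys :=
  ⟨PartT α, PartT α, fun A C => Refines A.1 C.1⟩

/-- The almost-refinement relational system `Part*(α)`. -/
def PartStar (α : Type) [BooleanAlgebra α] : RelSys :=
  ⟨PartT α, PartT α, fun A C => AlmostRefines A.1 C.1⟩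

/-- The eventual domination relational system `(ωω, ≤*, ωω)`. -/
def domSys : RelSys :=
  ⟨ℕ → ℕ, ℕ → ℕ, fun f g => ∀ᶠ n in Filter.atTop, f n ≤ g n⟩

/-- Quotients of Boolean rings are Boolean rings. -/
instance quotBooleanRing (R : Type) [BooleanRing R] (I : Ideal R) :
    BooleanRing (R ⧸ I) :=
  { (inferInstance : CommRing (R ⧸ I)) with
    isIdempotentElem := fun a => by
      obtain ⟨x, rfl⟩ := Ideal.Quotient.mk_surjective a
      show _ * _ = _
      rw [← map_mul, BooleanRing.mul_self] }

/-- The quotient of a Boolean algebra by an ideal (presented as a ring ideal of the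
associated Boolean ring), again viewed as a Boolean algebra. -/
def quotAlg (α : Type) [BooleanAlgebra α] (I : Ideal (AsBoolRing α)) : Type :=
  AsBoolAlg (AsBoolRing α ⧸ I)

noncomputable instance quotAlgBA (α : Type) [BooleanAlgebra α] (I : Ideal (AsBoolRing α)) :
    BooleanAlgebra (quotAlg α I) :=
  inferInstanceAs (BooleanAlgebra (AsBoolAlg (AsBoolRing α ⧸ I)))

/-- The quotient map from a Boolean algebra to its quotient algebra. -/
def quotCls {α : Type} [BooleanAlgebra α] (I : Ideal (AsBoolRing α)) (a : α) : quotAlg α I :=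
  toBoolAlg (Ideal.Quotient.mk I (toBoolRing a))

/-- The ideal of finite subsets of `ω`, as a ring ideal of `P(ω)`. -/
def finIdeal : Ideal (AsBoolRing (Set ℕ)) where
  carrier := {x | (ofBoolRing x : Set ℕ).Finite}
  zero_mem' := by simp [ofBoolRing_zero, Set.bot_eq_empty]
  add_mem' := by
    intro a b ha hb
    simpa [ofBoolRing_add] using ((ha.union hb).subset (Set.symmDiff_subset_union))
  smul_mem' := by
    intro c x hx
    simpa [smul_eq_mul, ofBoolRing_mul] using hx.subset (by simp [Set.inf_eq_inter])

/-- `P(ω)/fin`. -/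
def PomegaFin : Type := quotAlg (Set ℕ) finIdeal

noncomputable instance : BooleanAlgebra PomegaFin := quotAlgBA _ _

/-- The ideal `Fin` of the product algebra `ωB`: functions with finite support. -/
def finSuppIdeal (B : Type) [BooleanAlgebra B] : Ideal (AsBoolRing (ℕ → B)) where
  carrier := {x | {n | (ofBoolRing x : ℕ → B) n ≠ ⊥}.Finite}
  zero_mem' := by simp [ofBoolRing_zero]
  add_mem' := by
    intro a b ha hb
    refine ((ha.union hb).subset ?_)
    intro n hn
    simp only [ofBoolRing_add, Pi.symmDiff_apply, Set.mem_setOf_eq] at hn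
    by_contra h
    try push_neg at h
    simp only [Set.mem_union, Set.mem_setOf_eq] at h
    push_neg at h
    simp [h.1, h.2] at hn
  smul_mem' := by
    intro c x hx
    refine hx.subset ?_
    intro n hn
    simp only [smul_eq_mul, ofBoolRing_mul, Pi.inf_apply, Set.mem_setOf_eq] at hn
    simp only [Set.mem_setOf_eq]
    intro h
    simp [h] at hn

/-- The reduced power `ωB/Fin` of a Boolean algebra `B`. -/
def redPow (B : Type) [BooleanAlgebra B] : Type := quotAlg (ℕ → B) (finSuppIdeal B)

noncomputable instance (B : Type) [BooleanAlgebra B] : BooleanAlgebra (redPow B) := quotAlgBA _ _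
/-- The reaping relational system of a Boolean algebra. -/
def reapSys (α : Type) [BooleanAlgebra α] : RelSys :=
  ⟨α, {r : α // r ≠ ⊥}, fun b r => r.1 ≤ b ∨ r.1 ⊓ b = ⊥⟩

/-- An ultrafilter on a Boolean algebra. -/
def IsBAUltrafilter {α : Type} [BooleanAlgebra α] (U : Set α) : Prop :=
  ⊥ ∉ U ∧ (∀ a ∈ U, ∀ b ∈ U, a ⊓ b ∈ U) ∧ (∀ a ∈ U, ∀ b, a ≤ b → b ∈ U) ∧
    ∀ a : α, a ∈ U ∨ aᶜ ∈ U

/-- A principal ultrafilter: one generated by a single element. -/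
def IsPrincipal {α : Type} [BooleanAlgebra α] (U : Set α) : Prop :=
  ∃ a : α, U = {b | a ≤ b}

/-- The ultrafilter number of a Boolean algebra: the least cofinality of `(U, ≥)`
over non-principal ultrafilters `U`. -/
noncomputable def uNum (α : Type) [BooleanAlgebra α] : Cardinal :=
  sInf { c | ∃ U : Set α, IsBAUltrafilter U ∧ ¬ IsPrincipal U ∧
    ∃ D : Set α, D ⊆ U ∧ (∀ u ∈ U, ∃ d ∈ D, d ≤ u) ∧ Cardinal.mk D = c }

section Aux

variable {α : Type} [BooleanAlgebra α] (I : Ideal (AsBoolRing α))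

lemma quotCls_surj : Function.Surjective (quotCls (α := α) I) := by
  intro x
  obtain ⟨y, hy⟩ := Ideal.Quotient.mk_surjective (ofBoolAlg x)
  exact ⟨ofBoolRing y, by simp [quotCls, toBoolRing_ofBoolRing, hy]; exact toBoolAlg_ofBoolAlg x⟩

lemma quotCls_inf (a b : α) : quotCls I (a ⊓ b) = quotCls I a ⊓ quotCls I b := by
  simp [quotCls, toBoolRing_inf, map_mul, toBoolAlg_mul]; exact toBoolAlg_mul _ _

lemma quotCls_symmDiff (a b : α) :
    quotCls I (symmDiff a b) = symmDiff (quotCls I a) (quotCls I b) := by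
  simp [quotCls, toBoolRing_symmDiff, map_add, toBoolAlg_add]; rfl

lemma quotCls_top : quotCls I (⊤ : α) = ⊤ := by
  simp [quotCls, toBoolRing_top, map_one, toBoolAlg_one]; exact toBoolAlg_one (α := AsBoolRing α ⧸ I)

lemma quotCls_compl (a : α) : quotCls I aᶜ = (quotCls I a)ᶜ := by
  rw [← hnot_eq_compl, ← top_symmDiff, quotCls_symmDiff, quotCls_top, top_symmDiff, hnot_eq_compl]

lemma quotCls_eq_bot {a : α} : quotCls I a = ⊥ ↔ toBoolRing a ∈ I := by
  show (toBoolAlg (Ideal.Quotient.mk I (toBoolRing a)) : AsBoolAlg (AsBoolRing α ⧸ I)) = ⊥ ↔ _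
  rw [← toBoolAlg_zero, toBoolAlg_inj, Ideal.Quotient.eq_zero_iff_mem]

lemma quotCls_le {a b : α} : quotCls I a ≤ quotCls I b ↔ toBoolRing (a \ b) ∈ I := by
  rw [← sdiff_eq_bot_iff, sdiff_eq, ← quotCls_compl, ← quotCls_inf, ← sdiff_eq, quotCls_eq_bot]

end Aux

lemma mem_finIdeal {A : Set ℕ} : toBoolRing A ∈ finIdeal ↔ A.Finite := by
  show (ofBoolRing (toBoolRing A) : Set ℕ).Finite ↔ A.Finite
  rw [ofBoolRing_toBoolRing]

lemma mem_finSuppIdeal {B : Type} [BooleanAlgebra B] {f : ℕ → B} :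
    toBoolRing f ∈ finSuppIdeal B ↔ {n | f n ≠ ⊥}.Finite := by
  show {n | (ofBoolRing (toBoolRing f) : ℕ → B) n ≠ ⊥}.Finite ↔ _
  rw [ofBoolRing_toBoolRing]

lemma dNum_le_of_GT {S T : RelSys} (h : GT S T)
    (hne : {c | ∃ Y : Set T.Cod, Cardinal.mk Y = c ∧ ∀ x : T.Dom, ∃ y ∈ Y, T.Rel x y}.Nonempty) :
    dNum S ≤ dNum T := by
  obtain ⟨φm, φp, hφ⟩ := h
  refine le_csInf hne ?_
  rintro c ⟨Y, rfl, hY⟩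
  have hmem : Cardinal.mk (φp '' Y) ∈
      {c | ∃ Y' : Set S.Cod, Cardinal.mk Y' = c ∧ ∀ x : S.Dom, ∃ y ∈ Y', S.Rel x y} := by
    refine ⟨φp '' Y, rfl, fun x => ?_⟩
    obtain ⟨y, hyY, hy⟩ := hY (φm x)
    exact ⟨φp y, ⟨y, hyY, rfl⟩, hφ x y hy⟩
  exact (csInf_le (OrderBot.bddBelow _) hmem).trans Cardinal.mk_image_le

lemma bNum_le_of_GT {S T : RelSys} (h : GT S T)
    (hne : {c | ∃ X : Set S.Dom, Cardinal.mk X = c ∧ ∀ y : S.Cod, ∃ x ∈ X, ¬ S.Rel x y}.Nonempty) :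
    bNum T ≤ bNum S := by
  obtain ⟨φm, φp, hφ⟩ := h
  refine le_csInf hne ?_
  rintro c ⟨X, rfl, hX⟩
  have hmem : Cardinal.mk (φm '' X) ∈
      {c | ∃ X' : Set T.Dom, Cardinal.mk X' = c ∧ ∀ y : T.Cod, ∃ x ∈ X', ¬ T.Rel x y} := by
    refine ⟨φm '' X, rfl, fun y => ?_⟩
    obtain ⟨x, hxX, hx⟩ := hX (φp y)
    exact ⟨φm x, ⟨x, hxX, rfl⟩, fun hrel => hx (hφ x y hrel)⟩
  exact (csInf_le (OrderBot.bddBelow _) hmem).trans Cardinal.mk_image_le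

/-- `quotCls` of an infinite subset is nonzero in `P(ω)/fin`, and conversely. -/
lemma PomegaFin_cls_eq_bot {A : Set ℕ} : quotCls finIdeal A = (⊥ : PomegaFin) ↔ A.Finite := by
  exact (quotCls_eq_bot finIdeal).trans mem_finIdeal

lemma redPow_cls_eq_bot {B : Type} [BooleanAlgebra B] {f : ℕ → B} :
    quotCls (finSuppIdeal B) f = (⊥ : redPow B) ↔ {n | f n ≠ ⊥}.Finite := by
  exact (quotCls_eq_bot (finSuppIdeal B)).trans mem_finSuppIdeal

/-- The key Galois–Tukey connection. -/
lemma GT_reap (B : Type) [BooleanAlgebra B] [Nontrivial B] :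
    GT (reapSys PomegaFin) (reapSys (redPow B)) := by
  classical
  set rep : PomegaFin → Set ℕ := Function.surjInv (quotCls_surj finIdeal) with hrepdef
  have hrep : ∀ a, quotCls finIdeal (rep a) = a :=
    fun a => Function.surjInv_eq (quotCls_surj finIdeal) a
  set repB : redPow B → (ℕ → B) := Function.surjInv (quotCls_surj (finSuppIdeal B)) with hrepBdef
  have hrepB : ∀ r, quotCls (finSuppIdeal B) (repB r) = r :=
    fun r => Function.surjInv_eq (quotCls_surj (finSuppIdeal B)) r
  set χ : Set ℕ → (ℕ → B) := fun A n => if n ∈ A then ⊤ else ⊥ with hχ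
  have hne : ∀ r : {r : redPow B // r ≠ ⊥}, quotCls finIdeal {n | repB r.1 n ≠ ⊥} ≠ ⊥ := by
    intro r h
    replace h := PomegaFin_cls_eq_bot.mp h
    exact r.2 (by rw [← hrepB r.1]; exact redPow_cls_eq_bot.mpr h)
  refine ⟨fun a => quotCls (finSuppIdeal B) (χ (rep a)),
    fun r => ⟨quotCls finIdeal {n | repB r.1 n ≠ ⊥}, hne r⟩, ?_⟩
  intro a r hrel
  have hrel' : r.1 ≤ quotCls (finSuppIdeal B) (χ (rep a)) ∨
      r.1 ⊓ quotCls (finSuppIdeal B) (χ (rep a)) = ⊥ := hrel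
  show quotCls finIdeal {n | repB r.1 n ≠ ⊥} ≤ a ∨
      quotCls finIdeal {n | repB r.1 n ≠ ⊥} ⊓ a = ⊥
  obtain hle | hbot := hrel'
  · left
    rw [← hrep a, quotCls_le, mem_finIdeal]
    have h2 : toBoolRing (repB r.1 \ χ (rep a)) ∈ finSuppIdeal B := by
      rw [← quotCls_le, hrepB]
      exact hle
    rw [mem_finSuppIdeal] at h2
    refine h2.subset ?_
    rintro n ⟨hn1, hn2⟩
    have hb : χ (rep a) n = ⊥ := if_neg hn2
    simp only [Set.mem_setOf_eq, Pi.sdiff_apply, hb, sdiff_bot]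
    exact hn1
  · right
    rw [← hrep a, ← quotCls_inf]; refine PomegaFin_cls_eq_bot.mpr ?_
    have h2 : toBoolRing (repB r.1 ⊓ χ (rep a)) ∈ finSuppIdeal B := by
      rw [← quotCls_eq_bot, quotCls_inf, hrepB]
      exact hbot
    rw [mem_finSuppIdeal] at h2
    refine h2.subset ?_
    rintro n ⟨hn1, hn2⟩
    have hb : χ (rep a) n = ⊤ := if_pos hn2
    simp only [Set.mem_setOf_eq, Pi.inf_apply, hb, inf_top_eq]
    exact hn1

/-- `R(P(ω)/fin) ≤_T R(ωB/Fin)`; in particular `𝔯 ≤ 𝔯(ωB/Fin)` and `𝔰(ωB/Fin) ≤ 𝔰`. -/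
theorem stmt15 (B : Type) [BooleanAlgebra B] [Nontrivial B] :
    GT (reapSys PomegaFin) (reapSys (redPow B)) ∧
      dNum (reapSys PomegaFin) ≤ dNum (reapSys (redPow B)) ∧
      bNum (reapSys (redPow B)) ≤ bNum (reapSys PomegaFin) := by
  classical
  have hgt := GT_reap B
  refine ⟨hgt, dNum_le_of_GT hgt ?_, bNum_le_of_GT hgt ?_⟩
  · -- the dominating-set family of `reapSys (redPow B)` is nonempty: `univ` dominates
    have htop : (⊤ : redPow B) ≠ ⊥ := by
      intro h
      replace h := redPow_cls_eq_bot.mp ((quotCls_top (finSuppIdeal B)).trans h)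
      have huniv : {n : ℕ | (⊤ : ℕ → B) n ≠ ⊥} = Set.univ := by
        ext n; simp [top_ne_bot]
      rw [huniv] at h
      exact Set.infinite_univ h
    refine ⟨_, Set.univ, rfl, fun b : redPow B => ?_⟩
    by_cases hb : b = ⊥
    · refine ⟨⟨⊤, htop⟩, Set.mem_univ _, Or.inr ?_⟩
      show (⊤ : redPow B) ⊓ b = ⊥
      simp [hb]
    · exact ⟨⟨b, hb⟩, Set.mem_univ _, Or.inl le_rfl⟩
  · -- the unbounded-set family of `reapSys PomegaFin` is nonempty: `univ` is unbounded
    refine ⟨_, Set.univ, rfl, fun r : {r : PomegaFin // r ≠ ⊥} => ?_⟩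
    obtain ⟨A, hA⟩ := quotCls_surj finIdeal r.1
    have hAinf : A.Infinite := by
      intro hfin
      exact r.2 (by rw [← hA]; exact PomegaFin_cls_eq_bot.mpr hfin)
    have : Countable ↥A := Set.Countable.to_subtype (Set.to_countable A)
    have : Infinite ↥A := hAinf.to_subtype
    obtain ⟨d⟩ := nonempty_denumerable ↥A
    set e : ℕ ≃ ↥A := (Denumerable.eqv ↥A).symm with he
    set Bset : Set ℕ := {n | ∃ k, Even k ∧ (e k : ℕ) = n} with hBset
    have hBsub : Bset ⊆ A := by rintro n ⟨k, _, rfl⟩; exact (e k).2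
    have hBinf : Bset.Infinite := by
      refine Set.infinite_of_injective_forall_mem (f := fun k : ℕ => (e (2 * k) : ℕ)) ?_ ?_
      · intro k k' hkk
        have := e.injective (Subtype.val_injective hkk)
        omega
      · exact fun k => ⟨2 * k, ⟨k, by ring⟩, rfl⟩
    have hdiffinf : (A \ Bset).Infinite := by
      refine Set.infinite_of_injective_forall_mem (f := fun k : ℕ => (e (2 * k + 1) : ℕ)) ?_ ?_
      · intro k k' hkk
        have := e.injective (Subtype.val_injective hkk)
        omega
      · refine fun k => ⟨(e (2 * k + 1)).2, ?_⟩
        rintro ⟨j, hj, hje⟩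
        have := e.injective (Subtype.val_injective hje)
        obtain ⟨m, hm⟩ := hj
        omega
    refine ⟨quotCls finIdeal Bset, Set.mem_univ _, ?_⟩
    intro hrel
    obtain hle | hbot :=
      (hrel : r.1 ≤ quotCls finIdeal Bset ∨ r.1 ⊓ quotCls finIdeal Bset = ⊥)
    · rw [← hA] at hle; replace hle := mem_finIdeal.mp ((quotCls_le finIdeal).mp hle)
      exact hdiffinf hle
    · rw [← hA] at hbot; replace hbot := PomegaFin_cls_eq_bot.mp ((quotCls_inf finIdeal A Bset).trans hbot)
      have : A ⊓ Bset = Bset := inf_eq_right.mpr hBsub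
      rw [this] at hbot
      exact hBinf hbot
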